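/- Let 𝒢 = G_1 ⊆ ⋯ ⊆ G_m be an edgewise filtration of graphs. Then there exists a triangle-free subgraph H of G_m such that β_1(X(H)) ≥ |B_1(𝒢)|, the number of intervals in the degree-1 barcode of 𝒢. -/

import Mathlib

open Finset

/-- A finite abstract simplicial complex on vertex type `V`, including the empty simplex
(so that the associated chain complex is the augmented one and homology is reduced). -/
structure SimpComplex (V : Type) where
  faces : Finset (Finset V)
  empty_mem : ∅ ∈ faces
  down_closed : ∀ ⦃s t : Finset V⦄, s ∈ faces → t ⊆ s → t ∈ faces

variable {V : Type} [Fintype V] [LinearOrder V]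

/-- The coefficient of the (oriented) simplex `t` in the boundary of the simplex `s`,
using the linear order on the vertices to orient simplices. -/
def bdryCoeff (s t : Finset V) : ℤ :=
  ∑ v ∈ s, if s.erase v = t then (-1 : ℤ) ^ (s.filter (fun x => x < v)).card else 0

variable (𝕜 : Type) [Field 𝕜]

/-- The simplicial boundary operator on the total (augmented) chain module `Finset V → 𝕜`. -/
noncomputable def bdry (V : Type) [Fintype V] [LinearOrder V] :
    (Finset V → 𝕜) →ₗ[𝕜] (Finset V → 𝕜) where
  toFun f t := ∑ s : Finset V, (bdryCoeff s t : 𝕜) * f s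
  map_add' f g := by
    funext t
    simp [mul_add, Finset.sum_add_distrib]
  map_smul' c f := by
    funext t
    simp only [Pi.smul_apply, smul_eq_mul, RingHom.id_apply, Finset.mul_sum]
    exact Finset.sum_congr rfl fun s _ => by ring

/-- The submodule of chains of degree `k`, i.e. supported on faces of `K` with `k+1` vertices. -/
def degChains (K : SimpComplex V) (k : ℤ) : Submodule 𝕜 (Finset V → 𝕜) where
  carrier := {f | ∀ s : Finset V, f s ≠ 0 → s ∈ K.faces ∧ (s.card : ℤ) = k + 1}
  add_mem' := by
    intro f g hf hg s hs
    by_cases h : f s = 0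
    · exact hg s (fun h2 => hs (by simp [h, h2]))
    · exact hf s h
  zero_mem' := by intro s hs; exact absurd rfl hs
  smul_mem' := by
    intro c f hf s hs
    exact hf s (fun h => hs (by simp [h]))

/-- Reduced `k`-cycles of `K` with coefficients in `𝕜`. -/
noncomputable def cycles (K : SimpComplex V) (k : ℤ) : Submodule 𝕜 (Finset V → 𝕜) :=
  degChains 𝕜 K k ⊓ LinearMap.ker (bdry 𝕜 V)

/-- Reduced `k`-boundaries of `K` with coefficients in `𝕜`. -/
noncomputable def boundaries (K : SimpComplex V) (k : ℤ) : Submodule 𝕜 (Finset V → 𝕜) :=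
  (degChains 𝕜 K (k + 1)).map (bdry 𝕜 V)

/-- The reduced Betti number `β_k(K; 𝕜)`: the dimension of reduced simplicial homology,
realized as the quotient of the cycles by the boundaries that are cycles. -/
noncomputable def betti (K : SimpComplex V) (k : ℤ) : ℕ :=
  Module.finrank 𝕜 (↥(cycles 𝕜 K k) ⧸ ((boundaries 𝕜 K k).comap (cycles 𝕜 K k).subtype))

/-- The flag complex of a simple graph: faces are the cliques. -/
noncomputable def flagComplex (G : SimpleGraph V) : SimpComplex V where
  faces := @Finset.filter _ (fun s => G.IsClique (s : Set V))
    (fun _ => Classical.propDecidable _) Finset.univ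
  empty_mem := by simp [Finset.mem_filter]
  down_closed := by
    intro s t hs hts
    simp only [Finset.mem_filter, Finset.mem_univ, true_and] at hs ⊢
    exact hs.subset (by exact_mod_cast hts)

set_option linter.unusedSectionVars false
theorem mem_flagComplex_faces (G : SimpleGraph V) (s : Finset V) :
    s ∈ (flagComplex G).faces ↔ G.IsClique (s : Set V) := by
  simp [flagComplex]

theorem flagComplex_faces_mono {G G' : SimpleGraph V} (h : G ≤ G') :
    (flagComplex G).faces ⊆ (flagComplex G').faces := by
  intro s hs
  rw [mem_flagComplex_faces] at hs ⊢
  exact hs.mono h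

theorem degChains_mono {K L : SimpComplex V} (h : K.faces ⊆ L.faces) (k : ℤ) :
    degChains 𝕜 K k ≤ degChains 𝕜 L k := by
  intro f hf s hs
  exact ⟨h (hf s hs).1, (hf s hs).2⟩

theorem cycles_mono {K L : SimpComplex V} (h : K.faces ⊆ L.faces) (k : ℤ) :
    cycles 𝕜 K k ≤ cycles 𝕜 L k :=
  inf_le_inf (degChains_mono 𝕜 h k) le_rfl

theorem boundaries_mono {K L : SimpComplex V} (h : K.faces ⊆ L.faces) (k : ℤ) :
    boundaries 𝕜 K k ≤ boundaries 𝕜 L k :=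
  Submodule.map_mono (degChains_mono 𝕜 h (k + 1))

/-- The reduced homology of `K` in degree `k`, as a module: cycles modulo boundaries. -/
noncomputable abbrev homologyMod (K : SimpComplex V) (k : ℤ) :=
  ↥(cycles 𝕜 K k) ⧸ (boundaries 𝕜 K k).comap (cycles 𝕜 K k).subtype

/-- The map on reduced homology induced by an inclusion of simplicial complexes. -/
noncomputable def inducedMap {K L : SimpComplex V} (h : K.faces ⊆ L.faces) (k : ℤ) :
    homologyMod 𝕜 K k →ₗ[𝕜] homologyMod 𝕜 L k :=
  Submodule.mapQ _ _ (Submodule.inclusion (cycles_mono 𝕜 h k)) (by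
    intro x hx
    simp only [Submodule.mem_comap, Submodule.subtype_apply] at hx ⊢
    simpa using boundaries_mono 𝕜 h k hx)

/-- `G`, restricted to indices `1, …, m`, is an edgewise filtration: increasing, with `G i`
having exactly `i` edges. -/
def IsEdgewiseFiltration {W : Type} (G : ℕ → SimpleGraph W) (m : ℕ) : Prop :=
  (∀ i j : ℕ, 1 ≤ i → i ≤ j → j ≤ m → G i ≤ G j) ∧
  (∀ i : ℕ, 1 ≤ i → i ≤ m → Nat.card (G i).edgeSet = i)

open Classical in
/-- `B` is the degree-`k` barcode (a multiset of half-open intervals `[a, b)`, encoded as pairs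
`(a, b)` with `1 ≤ a < b ≤ m + 1`) of the filtration of flag complexes
`X(G 1) ⊆ ⋯ ⊆ X(G m)`: for all `1 ≤ i ≤ j ≤ m`, the rank of the map
`H̃_k(X(G i)) → H̃_k(X(G j))` induced by inclusion equals the number of intervals `[a, b)` of `B`
with `a ≤ i` and `j < b`. (This rank condition characterizes the interval decomposition of the
persistence module.) -/
def IsBarcode (G : ℕ → SimpleGraph V) (m : ℕ) (k : ℤ) (B : Multiset (ℕ × ℕ)) : Prop :=
  (∀ p ∈ B, 1 ≤ p.1 ∧ p.1 < p.2 ∧ p.2 ≤ m + 1) ∧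
  ∀ i j : ℕ, 1 ≤ i → i ≤ j → j ≤ m →
    ∀ h : (flagComplex (G i)).faces ⊆ (flagComplex (G j)).faces,
      Module.finrank 𝕜 (LinearMap.range (inducedMap 𝕜 h k)) =
        Multiset.card (B.filter (fun p => p.1 ≤ i ∧ j < p.2))
section Aux1
open Finset
variable {V : Type} [Fintype V] [LinearOrder V]

lemma finset_pair_eq_pair_iff {a b c d : V} :
    ({a, b} : Finset V) = {c, d} ↔ a = c ∧ b = d ∨ a = d ∧ b = c := by
  rw [← Finset.coe_inj]
  push_cast
  exact Set.pair_eq_pair_iff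

lemma bdryCoeff_pair {x y : V} (hxy : x < y) (t : Finset V) :
    bdryCoeff {x, y} t = (if t = {y} then 1 else 0) - (if t = {x} then 1 else 0) := by
  have hne : x ≠ y := ne_of_lt hxy
  have h1 : ({x, y} : Finset V).erase x = {y} := by
    rw [Finset.erase_insert (by simp [hne])]
  have h2 : ({x, y} : Finset V).erase y = {x} := by
    rw [Finset.pair_comm, Finset.erase_insert (by simp [hne.symm])]
  have h3 : ({x, y} : Finset V).filter (fun z => z < x) = ∅ := by
    ext z
    simp only [Finset.mem_filter, Finset.mem_insert, Finset.mem_singleton, Finset.notMem_empty,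
      iff_false, not_and]
    rintro (rfl | rfl)
    · exact lt_irrefl _
    · exact hxy.asymm
  have h4 : ({x, y} : Finset V).filter (fun z => z < y) = {x} := by
    ext z
    simp only [Finset.mem_filter, Finset.mem_insert, Finset.mem_singleton]
    constructor
    · rintro ⟨rfl | rfl, h⟩
      · rfl
      · exact absurd h (lt_irrefl _)
    · rintro rfl; exact ⟨Or.inl rfl, hxy⟩
  have hsy : ({x} : Finset V) ≠ {y} := by simp [hne]
  unfold bdryCoeff
  rw [Finset.sum_pair hne, h1, h2, h3, h4]
  simp only [Finset.card_empty, Finset.card_singleton, pow_zero, pow_one]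
  by_cases hy : t = {y} <;> by_cases hx : t = {x} <;>
    first
      | (rw [if_neg (fun h => hy h.symm), if_neg (fun h => hx h.symm), if_neg hy, if_neg hx]; norm_num)
      | simp_all [Ne.symm hsy]

lemma bdryCoeff_triple {a b c : V} (hab : a < b) (hbc : b < c) (t : Finset V) :
    bdryCoeff {a, b, c} t = (if t = {b, c} then 1 else 0) - (if t = {a, c} then 1 else 0)
      + (if t = {a, b} then 1 else 0) := by
  have hac : a < c := hab.trans hbc
  have h1 : ({a, b, c} : Finset V).erase a = {b, c} := by
    rw [Finset.erase_insert (by simp [hab.ne, hac.ne])]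
  have h2 : ({a, b, c} : Finset V).erase b = {a, c} := by
    ext z
    simp only [Finset.mem_erase, Finset.mem_insert, Finset.mem_singleton]
    constructor
    · rintro ⟨hzb, rfl | rfl | rfl⟩
      · exact Or.inl rfl
      · exact absurd rfl hzb
      · exact Or.inr rfl
    · rintro (rfl | rfl)
      · exact ⟨hab.ne, Or.inl rfl⟩
      · exact ⟨hbc.ne', Or.inr (Or.inr rfl)⟩
  have h3 : ({a, b, c} : Finset V).erase c = {a, b} := by
    ext z
    simp only [Finset.mem_erase, Finset.mem_insert, Finset.mem_singleton]
    constructor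
    · rintro ⟨hzc, rfl | rfl | rfl⟩
      · exact Or.inl rfl
      · exact Or.inr rfl
      · exact absurd rfl hzc
    · rintro (rfl | rfl)
      · exact ⟨hac.ne, Or.inl rfl⟩
      · exact ⟨hbc.ne, Or.inr (Or.inl rfl)⟩
  have f1 : ({a, b, c} : Finset V).filter (fun z => z < a) = ∅ := by
    ext z
    simp only [Finset.mem_filter, Finset.mem_insert, Finset.mem_singleton, Finset.notMem_empty,
      iff_false, not_and]
    rintro (rfl | rfl | rfl)
    · exact lt_irrefl _
    · exact hab.asymm
    · exact hac.asymm
  have f2 : ({a, b, c} : Finset V).filter (fun z => z < b) = {a} := by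
    ext z
    simp only [Finset.mem_filter, Finset.mem_insert, Finset.mem_singleton]
    constructor
    · rintro ⟨rfl | rfl | rfl, h⟩
      · rfl
      · exact absurd h (lt_irrefl _)
      · exact absurd h hbc.asymm
    · rintro rfl; exact ⟨Or.inl rfl, hab⟩
  have f3 : ({a, b, c} : Finset V).filter (fun z => z < c) = {a, b} := by
    ext z
    simp only [Finset.mem_filter, Finset.mem_insert, Finset.mem_singleton]
    constructor
    · rintro ⟨rfl | rfl | rfl, h⟩
      · exact Or.inl rfl
      · exact Or.inr rfl
      · exact absurd h (lt_irrefl _)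
    · rintro (rfl | rfl)
      · exact ⟨Or.inl rfl, hac⟩
      · exact ⟨Or.inr (Or.inl rfl), hbc⟩
  have hmem : a ∉ ({b, c} : Finset V) := by simp [hab.ne, hac.ne]
  have e12 : ({b, c} : Finset V) ≠ {a, c} := by
    intro h
    rcases finset_pair_eq_pair_iff.mp h with ⟨h1, _⟩ | ⟨h2, _⟩
    · exact hab.ne' h1
    · exact hbc.ne h2
  have e13 : ({b, c} : Finset V) ≠ {a, b} := by
    intro h
    rcases finset_pair_eq_pair_iff.mp h with ⟨h1, _⟩ | ⟨_, h2⟩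
    · exact hab.ne' h1
    · exact hac.ne' h2
  have e23 : ({a, c} : Finset V) ≠ {a, b} := by
    intro h
    rcases finset_pair_eq_pair_iff.mp h with ⟨_, h1⟩ | ⟨h2, _⟩
    · exact hbc.ne' h1
    · exact hab.ne h2
  have hcard : ({a, b} : Finset V).card = 2 := Finset.card_pair hab.ne
  unfold bdryCoeff
  rw [Finset.sum_insert hmem, Finset.sum_pair hbc.ne, h1, h2, h3, f1, f2, f3, hcard]
  simp only [Finset.card_empty, Finset.card_singleton, pow_zero, pow_one]
  by_cases t1 : t = {b, c} <;> by_cases t2 : t = {a, c} <;> by_cases t3 : t = {a, b} <;>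
    first
      | (rw [if_neg (fun h => t1 h.symm), if_neg (fun h => t2 h.symm),
          if_neg (fun h => t3 h.symm), if_neg t1, if_neg t2, if_neg t3]; norm_num)
      | simp_all [Ne.symm e12, Ne.symm e13, Ne.symm e23]

end Aux1
section Aux2
open Finset
variable {V : Type} [Fintype V] [LinearOrder V]

lemma triple_pair_ne_1 {a b c : V} (hab : a < b) (hbc : b < c) :
    ({b, c} : Finset V) ≠ {a, c} := by
  intro h
  rcases finset_pair_eq_pair_iff.mp h with ⟨h1, _⟩ | ⟨h2, _⟩
  · exact hab.ne' h1
  · exact hbc.ne h2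

lemma triple_pair_ne_2 {a b c : V} (hab : a < b) (hbc : b < c) :
    ({b, c} : Finset V) ≠ {a, b} := by
  intro h
  rcases finset_pair_eq_pair_iff.mp h with ⟨h1, _⟩ | ⟨_, h2⟩
  · exact hab.ne' h1
  · exact (hab.trans hbc).ne' h2

lemma triple_pair_ne_3 {a b c : V} (hab : a < b) (hbc : b < c) :
    ({a, c} : Finset V) ≠ {a, b} := by
  intro h
  rcases finset_pair_eq_pair_iff.mp h with ⟨_, h1⟩ | ⟨h2, _⟩
  · exact hbc.ne' h1
  · exact hab.ne h2

lemma face_pair_iff (G : SimpleGraph V) {x y : V} (hne : x ≠ y) :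
    ({x, y} : Finset V) ∈ (flagComplex G).faces ↔ G.Adj x y := by
  rw [mem_flagComplex_faces]
  constructor
  · intro h
    exact h (by simp) (by simp) hne
  · intro h
    rw [Finset.coe_insert, Finset.coe_singleton]
    intro a ha b hb hab
    rcases ha with rfl | ha <;> rcases hb with rfl | hb
    · exact absurd rfl hab
    · rcases hb with rfl; exact h
    · rcases ha with rfl; exact h.symm
    · rcases ha with rfl; rcases hb with rfl; exact absurd rfl hab

lemma face_two_exists (G : SimpleGraph V) {s : Finset V}
    (h : s ∈ (flagComplex G).faces) (hcard : s.card = 2) :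
    ∃ x y, x < y ∧ G.Adj x y ∧ s = {x, y} := by
  obtain ⟨x, y, hne, rfl⟩ := Finset.card_eq_two.mp hcard
  rcases hne.lt_or_gt with hlt | hlt
  · exact ⟨x, y, hlt, (face_pair_iff G hne).mp h, rfl⟩
  · rw [Finset.pair_comm] at h ⊢
    exact ⟨y, x, hlt, (face_pair_iff G hne.symm).mp h, rfl⟩

variable (𝕜 : Type) [Field 𝕜]

lemma bdry_apply (f : Finset V → 𝕜) (t : Finset V) :
    bdry 𝕜 V f t = ∑ s : Finset V, (bdryCoeff s t : 𝕜) * f s := rfl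

lemma bdry_single (s : Finset V) (c : 𝕜) (t : Finset V) :
    bdry 𝕜 V (Pi.single s c) t = (bdryCoeff s t : 𝕜) * c := by
  rw [bdry_apply, Finset.sum_eq_single s]
  · rw [Pi.single_eq_same]
  · intro b _ hb
    rw [Pi.single_eq_of_ne hb, mul_zero]
  · intro h
    exact absurd (Finset.mem_univ s) h

lemma mem_degChains_iff (K : SimpComplex V) (k : ℤ) (f : Finset V → 𝕜) :
    f ∈ degChains 𝕜 K k ↔ ∀ s : Finset V, f s ≠ 0 → s ∈ K.faces ∧ (s.card : ℤ) = k + 1 :=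
  Iff.rfl

lemma mem_cycles_iff (K : SimpComplex V) (k : ℤ) (f : Finset V → 𝕜) :
    f ∈ cycles 𝕜 K k ↔ f ∈ degChains 𝕜 K k ∧ bdry 𝕜 V f = 0 := by
  rw [cycles, Submodule.mem_inf, LinearMap.mem_ker]

end Aux2
section Aux3
open Finset
variable {V : Type} [Fintype V] [LinearOrder V]
variable (𝕜 : Type) [Field 𝕜]
variable {G G' : SimpleGraph V} {u v : V}

lemma clique2_cases (hedges : ∀ x y, G'.Adj x y → s(x, y) = s(u, v) ∨ G.Adj x y)
    {s : Finset V} (hs : s ∈ (flagComplex G').faces) (hc : s.card = 2) :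
    s = ({u, v} : Finset V) ∨ s ∈ (flagComplex G).faces := by
  obtain ⟨x, y, hxy, hadj, rfl⟩ := face_two_exists G' hs hc
  rcases hedges x y hadj with h | h
  · left
    rcases Sym2.eq_iff.mp h with ⟨rfl, rfl⟩ | ⟨rfl, rfl⟩
    · rfl
    · exact Finset.pair_comm _ _
  · right
    exact (face_pair_iff G hxy.ne).mpr h

lemma sum_bdryCoeff_pair (C : Finset V) {x y : V} (hxy : x < y) :
    ∑ w ∈ C, bdryCoeff {x, y} ({w} : Finset V)
      = (if y ∈ C then 1 else 0) - (if x ∈ C then 1 else 0) := by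
  have h : ∀ w ∈ C, bdryCoeff {x, y} ({w} : Finset V)
      = (if w = y then (1 : ℤ) else 0) - (if w = x then 1 else 0) := by
    intro w _
    rw [bdryCoeff_pair hxy]
    simp only [Finset.singleton_inj]
  rw [Finset.sum_congr rfl h, Finset.sum_sub_distrib,
    Finset.sum_ite_eq' C y (fun _ => (1 : ℤ)), Finset.sum_ite_eq' C x (fun _ => (1 : ℤ))]

lemma cycles_eq_of_not_reachable (huv : u < v) (hle : G ≤ G')
    (hedges : ∀ x y, G'.Adj x y → s(x, y) = s(u, v) ∨ G.Adj x y)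
    (hreach : ¬ G.Reachable u v) :
    cycles 𝕜 (flagComplex G') 1 = cycles 𝕜 (flagComplex G) 1 := by
  classical
  refine le_antisymm ?_ (cycles_mono 𝕜 (flagComplex_faces_mono hle) 1)
  intro z hz
  rw [mem_cycles_iff] at hz
  obtain ⟨hz1, hz2⟩ := hz
  set C : Finset V := Finset.univ.filter (fun w => G.Reachable u w) with hC
  have hmemC : ∀ w, w ∈ C ↔ G.Reachable u w := by
    intro w; simp [hC]
  have key : (0 : 𝕜) = ∑ s : Finset V, (∑ w ∈ C, (bdryCoeff s ({w} : Finset V) : 𝕜)) * z s := by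
    have h0 : ∑ w ∈ C, bdry 𝕜 V z {w} = 0 := by rw [hz2]; simp
    rw [← h0]
    simp only [bdry_apply]
    rw [Finset.sum_comm]
    exact Finset.sum_congr rfl (fun s _ => by rw [Finset.sum_mul])
  have inner : ∀ s : Finset V, s ≠ ({u, v} : Finset V) →
      (∑ w ∈ C, (bdryCoeff s ({w} : Finset V) : 𝕜)) * z s = 0 := by
    intro s hs
    by_cases hzs : z s = 0
    · rw [hzs, mul_zero]
    obtain ⟨hface, hcard⟩ := hz1 s hzs
    have hcard2 : s.card = 2 := by exact_mod_cast hcard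
    obtain ⟨x, y, hxy, hadj, rfl⟩ := face_two_exists G' hface hcard2
    have hadjG : G.Adj x y := by
      rcases hedges x y hadj with h | h
      · exfalso
        apply hs
        rcases Sym2.eq_iff.mp h with ⟨rfl, rfl⟩ | ⟨rfl, rfl⟩
        · rfl
        · exact Finset.pair_comm _ _
      · exact h
    have hsum : (∑ w ∈ C, (bdryCoeff {x, y} ({w} : Finset V) : 𝕜)) = 0 := by
      rw [← Int.cast_sum, sum_bdryCoeff_pair C hxy]
      by_cases hx : x ∈ C
      · rw [if_pos hx, if_pos (by
          rw [hmemC] at hx ⊢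
          exact hx.trans hadjG.reachable)]
        simp
      · rw [if_neg hx, if_neg (fun hy => hx (by
          rw [hmemC] at hy ⊢
          exact hy.trans hadjG.symm.reachable))]
        simp
    rw [hsum, zero_mul]
  have he0 : z ({u, v} : Finset V) = 0 := by
    have := key.trans (Finset.sum_eq_single_of_mem ({u, v} : Finset V)
      (Finset.mem_univ _) (fun s _ hs => inner s hs))
    rw [← Int.cast_sum, sum_bdryCoeff_pair C huv] at this
    have hu : u ∈ C := (hmemC u).mpr (SimpleGraph.Reachable.refl u)
    have hv : v ∉ C := fun h => hreach ((hmemC v).mp h)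
    rw [if_pos hu, if_neg hv] at this
    have h2 : (0 : 𝕜) = -(z {u, v}) := by
      rw [this]; push_cast; ring
    exact neg_eq_zero.mp h2.symm
  rw [mem_cycles_iff]
  refine ⟨?_, hz2⟩
  intro s hzs
  obtain ⟨hface, hcard⟩ := hz1 s hzs
  have hcard2 : s.card = 2 := by exact_mod_cast hcard
  rcases clique2_cases hedges hface hcard2 with rfl | hfG
  · exact absurd he0 hzs
  · exact ⟨hfG, hcard⟩

end Aux3
section Aux4
open Finset
variable {V : Type} [Fintype V] [LinearOrder V]
variable (𝕜 : Type) [Field 𝕜]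

lemma sum_bdryCoeff_mul_triple {a b c : V} (hab : a < b) (hbc : b < c) (t : Finset V) :
    ∑ s : Finset V, bdryCoeff s t * bdryCoeff {a, b, c} s = 0 := by
  have h : ∀ s ∈ Finset.univ, bdryCoeff s t * bdryCoeff {a, b, c} s
      = ((if s = ({b, c} : Finset V) then bdryCoeff s t else 0)
          - (if s = ({a, c} : Finset V) then bdryCoeff s t else 0))
        + (if s = ({a, b} : Finset V) then bdryCoeff s t else 0) := by
    intro s _
    rw [bdryCoeff_triple hab hbc]
    simp only [mul_add, mul_sub, mul_ite, mul_one, mul_zero]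
  rw [Finset.sum_congr rfl h, Finset.sum_add_distrib, Finset.sum_sub_distrib,
    Finset.sum_ite_eq' Finset.univ ({b, c} : Finset V) (fun s => bdryCoeff s t),
    Finset.sum_ite_eq' Finset.univ ({a, c} : Finset V) (fun s => bdryCoeff s t),
    Finset.sum_ite_eq' Finset.univ ({a, b} : Finset V) (fun s => bdryCoeff s t)]
  simp only [Finset.mem_univ, if_true]
  rw [bdryCoeff_pair hbc, bdryCoeff_pair (hab.trans hbc), bdryCoeff_pair hab]
  ring

lemma bdry_bdry_triple {a b c : V} (hab : a < b) (hbc : b < c) :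
    bdry 𝕜 V (bdry 𝕜 V (Pi.single ({a, b, c} : Finset V) (1 : 𝕜))) = 0 := by
  funext t
  rw [bdry_apply]
  have h : ∀ s ∈ Finset.univ, (bdryCoeff s t : 𝕜) * (bdry 𝕜 V (Pi.single ({a, b, c} : Finset V) (1 : 𝕜)) s)
      = ((bdryCoeff s t * bdryCoeff {a, b, c} s : ℤ) : 𝕜) := by
    intro s _
    rw [bdry_single, mul_one]
    push_cast
    ring
  rw [Finset.sum_congr rfl h, ← Int.cast_sum, sum_bdryCoeff_mul_triple hab hbc, Int.cast_zero]
  simp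

lemma triple_card {a b c : V} (hab : a < b) (hbc : b < c) :
    ({a, b, c} : Finset V).card = 3 := by
  rw [Finset.card_insert_of_notMem (by simp [hab.ne, (hab.trans hbc).ne]),
    Finset.card_pair hbc.ne]

lemma bt_mem_degChains_one (K : SimpComplex V) {a b c : V} (hab : a < b) (hbc : b < c)
    (hT : ({a, b, c} : Finset V) ∈ K.faces) :
    bdry 𝕜 V (Pi.single ({a, b, c} : Finset V) (1 : 𝕜)) ∈ degChains 𝕜 K 1 := by
  intro s hs
  rw [bdry_single, mul_one] at hs
  have hbc0 : bdryCoeff {a, b, c} s ≠ 0 := fun h => hs (by rw [h]; simp)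
  rw [bdryCoeff_triple hab hbc] at hbc0
  have hsub : ∀ t : Finset V, t ⊆ ({a, b, c} : Finset V) → t ∈ K.faces :=
    fun t ht => K.down_closed hT ht
  by_cases h1 : s = ({b, c} : Finset V)
  · subst h1
    refine ⟨hsub _ (by intro x hx; simp at hx ⊢; tauto), ?_⟩
    rw [Finset.card_pair hbc.ne]
    norm_num
  · by_cases h2 : s = ({a, c} : Finset V)
    · subst h2
      refine ⟨hsub _ (by intro x hx; simp at hx ⊢; tauto), ?_⟩
      rw [Finset.card_pair (hab.trans hbc).ne]
      norm_num
    · by_cases h3 : s = ({a, b} : Finset V)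
      · subst h3
        refine ⟨hsub _ (by intro x hx; simp at hx ⊢; tauto), ?_⟩
        rw [Finset.card_pair hab.ne]
        norm_num
      · exfalso
        rw [if_neg h1, if_neg h2, if_neg h3] at hbc0
        exact hbc0 (by ring)

variable {G G' : SimpleGraph V} {u v : V}

lemma tri_main {a b c : V} (hab : a < b) (hbc : b < c)
    (hne : u ≠ v)
    (hnadj : ¬ G.Adj u v)
    (hedges : ∀ x y, G'.Adj x y → s(x, y) = s(u, v) ∨ G.Adj x y)
    (hTface : ({a, b, c} : Finset V) ∈ (flagComplex G').faces)
    (he : ({u, v} : Finset V) = {a, b} ∨ ({u, v} : Finset V) = {a, c}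
      ∨ ({u, v} : Finset V) = {b, c}) :
    cycles 𝕜 (flagComplex G') 1 ≤ cycles 𝕜 (flagComplex G) 1 ⊔ boundaries 𝕜 (flagComplex G') 1 := by
  intro z hz
  rw [mem_cycles_iff] at hz
  obtain ⟨hz1, hz2⟩ := hz
  set bt := bdry 𝕜 V (Pi.single ({a, b, c} : Finset V) (1 : 𝕜)) with hbt
  have hbtval : ∀ s, bt s = (bdryCoeff {a, b, c} s : 𝕜) := fun s => by
    rw [hbt, bdry_single, mul_one]
  have hbte : bt ({u, v} : Finset V) ≠ 0 := by
    rw [hbtval, bdryCoeff_triple hab hbc]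
    rcases he with h | h | h <;> rw [h]
    · rw [if_neg (triple_pair_ne_2 hab hbc).symm, if_neg (triple_pair_ne_3 hab hbc).symm,
        if_pos rfl]
      simp
    · rw [if_neg (triple_pair_ne_1 hab hbc).symm, if_pos rfl,
        if_neg (triple_pair_ne_3 hab hbc)]
      simp
    · rw [if_pos rfl, if_neg (triple_pair_ne_1 hab hbc), if_neg (triple_pair_ne_2 hab hbc)]
      simp
  set c0 : 𝕜 := z ({u, v} : Finset V) * (bt ({u, v} : Finset V))⁻¹ with hc0
  set z' := z - c0 • bt with hz'
  have hz'e : z' ({u, v} : Finset V) = 0 := by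
    rw [hz', Pi.sub_apply, Pi.smul_apply, smul_eq_mul, hc0]
    field_simp
    simp
  have hz'mem : z' ∈ cycles 𝕜 (flagComplex G) 1 := by
    rw [mem_cycles_iff]
    constructor
    · intro s hs
      have hsface' : s ∈ (flagComplex G').faces ∧ (s.card : ℤ) = 1 + 1 := by
        by_cases hzs : z s = 0
        · have hbts : bt s ≠ 0 := by
            intro h0
            apply hs
            rw [hz', Pi.sub_apply, Pi.smul_apply, smul_eq_mul, hzs, h0, mul_zero, sub_zero]
          exact bt_mem_degChains_one 𝕜 (flagComplex G') hab hbc hTface s hbts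
        · exact hz1 s hzs
      obtain ⟨hf', hc'⟩ := hsface'
      have hcard2 : s.card = 2 := by exact_mod_cast hc'
      have hs_ne : s ≠ ({u, v} : Finset V) := fun h => hs (h ▸ hz'e)
      rcases clique2_cases hedges hf' hcard2 with rfl | hfG
      · exact absurd rfl hs_ne
      · exact ⟨hfG, hc'⟩
    · rw [hz', map_sub, map_smul, hz2, hbt, bdry_bdry_triple 𝕜 hab hbc]
      simp
  have hbtbdry : bt ∈ boundaries 𝕜 (flagComplex G') 1 := by
    refine Submodule.mem_map.mpr ⟨Pi.single ({a, b, c} : Finset V) (1 : 𝕜), ?_, rfl⟩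
    intro s hs
    have hseq : s = ({a, b, c} : Finset V) := by
      by_contra hne'
      exact hs (Pi.single_eq_of_ne hne' 1)
    subst hseq
    refine ⟨hTface, ?_⟩
    rw [triple_card hab hbc]
    norm_num
  have hzeq : z = z' + c0 • bt := by
    rw [hz']
    abel
  rw [hzeq]
  exact Submodule.add_mem _ (Submodule.mem_sup_left hz'mem)
    (Submodule.mem_sup_right (Submodule.smul_mem _ _ hbtbdry))

lemma cycles_le_sup_of_triangle (huv : u < v) (hle : G ≤ G')
    (hadj : G'.Adj u v) (hnadj : ¬ G.Adj u v)
    (hedges : ∀ x y, G'.Adj x y → s(x, y) = s(u, v) ∨ G.Adj x y)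
    {w : V} (hw1 : G.Adj u w) (hw2 : G.Adj w v) :
    cycles 𝕜 (flagComplex G') 1 ≤ cycles 𝕜 (flagComplex G) 1 ⊔ boundaries 𝕜 (flagComplex G') 1 := by
  have hTclique : (insert w ({u, v} : Finset V)) ∈ (flagComplex G').faces := by
    rw [mem_flagComplex_faces]
    intro x hx y hy hxyne
    simp only [Finset.coe_insert, Finset.coe_singleton, Set.mem_insert_iff,
      Set.mem_singleton_iff] at hx hy
    rcases hx with rfl | rfl | rfl <;> rcases hy with rfl | rfl | rfl
    · exact absurd rfl hxyne
    · exact (hle hw1).symm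
    · exact hle hw2
    · exact hle hw1
    · exact absurd rfl hxyne
    · exact hadj
    · exact (hle hw2).symm
    · exact hadj.symm
    · exact absurd rfl hxyne
  have hwu : w ≠ u := hw1.ne'
  have hwv : w ≠ v := hw2.ne
  rcases lt_trichotomy w u with h1 | h1 | h1
  · exact tri_main 𝕜 h1 huv huv.ne hnadj hedges hTclique (Or.inr (Or.inr rfl))
  · exact absurd h1 hwu
  · rcases lt_trichotomy w v with h2 | h2 | h2
    · refine tri_main 𝕜 h1 h2 huv.ne hnadj hedges ?_ (Or.inr (Or.inl rfl))
      rw [show ({u, w, v} : Finset V) = insert w ({u, v} : Finset V) by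
        ext x; simp; tauto]
      exact hTclique
    · exact absurd h2 hwv
    · refine tri_main 𝕜 huv h2 huv.ne hnadj hedges ?_ (Or.inl rfl)
      rw [show ({u, v, w} : Finset V) = insert w ({u, v} : Finset V) by
        ext x; simp; tauto]
      exact hTclique

end Aux4
section Aux5
open Finset Submodule
variable {V : Type} [Fintype V] [LinearOrder V]
variable (𝕜 : Type) [Field 𝕜]

lemma range_inducedMap {K L : SimpComplex V} (h : K.faces ⊆ L.faces) (k : ℤ) :
    LinearMap.range (inducedMap 𝕜 h k)
      = Submodule.map ((boundaries 𝕜 L k).comap (cycles 𝕜 L k).subtype).mkQ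
          ((cycles 𝕜 K k).comap (cycles 𝕜 L k).subtype) := by
  ext y
  constructor
  · rintro ⟨x, rfl⟩
    obtain ⟨x', rfl⟩ := Submodule.Quotient.mk_surjective _ x
    rw [inducedMap, Submodule.mapQ_apply]
    refine Submodule.mem_map.mpr ⟨Submodule.inclusion (cycles_mono 𝕜 h k) x', ?_, rfl⟩
    exact x'.2
  · rintro ⟨w, hw, rfl⟩
    refine ⟨Submodule.Quotient.mk ⟨w.1, hw⟩, ?_⟩
    rw [inducedMap, Submodule.mapQ_apply]
    rfl

lemma rank_eq_betti_of_cycles_le_sup {K L : SimpComplex V} (h : K.faces ⊆ L.faces)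
    (hsup : cycles 𝕜 L 1 ≤ cycles 𝕜 K 1 ⊔ boundaries 𝕜 L 1) :
    Module.finrank 𝕜 (LinearMap.range (inducedMap 𝕜 h 1)) = betti 𝕜 L 1 := by
  have htop : LinearMap.range (inducedMap 𝕜 h 1) = ⊤ := by
    rw [range_inducedMap]
    rw [Submodule.eq_top_iff']
    intro y
    obtain ⟨z, rfl⟩ := Submodule.Quotient.mk_surjective _ y
    obtain ⟨x, hx, b, hb, hxb⟩ := Submodule.mem_sup.mp (hsup z.2)
    have hbL : b ∈ cycles 𝕜 L 1 := by
      have : b = (z : Finset V → 𝕜) - x := by rw [← hxb]; abel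
      rw [this]
      exact Submodule.sub_mem _ z.2 (cycles_mono 𝕜 h 1 hx)
    refine Submodule.mem_map.mpr ⟨⟨x, cycles_mono 𝕜 h 1 hx⟩, hx, ?_⟩
    rw [Submodule.mkQ_apply, Submodule.Quotient.eq]
    show (⟨x, _⟩ - z : ↥(cycles 𝕜 L 1)) ∈ _
    rw [Submodule.mem_comap]
    have : ((⟨x, cycles_mono 𝕜 h 1 hx⟩ - z : ↥(cycles 𝕜 L 1)) : Finset V → 𝕜) = -b := by
      simp only [Submodule.coe_subtype, AddSubgroupClass.coe_sub]
      rw [← hxb]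
      abel
    show ((⟨x, _⟩ - z : ↥(cycles 𝕜 L 1)) : Finset V → 𝕜) ∈ boundaries 𝕜 L 1
    rw [this]
    exact Submodule.neg_mem _ hb
  rw [htop, betti]
  exact finrank_top 𝕜 _

lemma betti_le_rank_add_one {K L : SimpComplex V} (h : K.faces ⊆ L.faces) {e : Finset V}
    (hcap : cycles 𝕜 K 1 = cycles 𝕜 L 1 ⊓ LinearMap.ker
      (LinearMap.proj (R := 𝕜) (φ := fun _ : Finset V => 𝕜) e)) :
    betti 𝕜 L 1 ≤ Module.finrank 𝕜 (LinearMap.range (inducedMap 𝕜 h 1)) + 1 := by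
  classical
  set M0 := ↥(cycles 𝕜 L 1)
  set N : Submodule 𝕜 M0 := (boundaries 𝕜 L 1).comap (cycles 𝕜 L 1).subtype with hN
  set S : Submodule 𝕜 M0 := (cycles 𝕜 K 1).comap (cycles 𝕜 L 1).subtype with hS
  have hrange : Module.finrank 𝕜 (LinearMap.range (inducedMap 𝕜 h 1))
      = Module.finrank 𝕜 (S.map N.mkQ) := by
    rw [range_inducedMap]
  have hsplit : betti 𝕜 L 1
      = Module.finrank 𝕜 ((M0 ⧸ N) ⧸ (S.map N.mkQ)) + Module.finrank 𝕜 (S.map N.mkQ) :=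
    (Submodule.finrank_quotient_add_finrank (S.map N.mkQ)).symm
  have hmapsup : (N ⊔ S).map N.mkQ = S.map N.mkQ := by
    rw [Submodule.map_sup]
    have : N.map N.mkQ = ⊥ := by
      refine le_bot_iff.mp ?_
      rintro y ⟨x, hx, rfl⟩
      simpa using (Submodule.Quotient.mk_eq_zero N).mpr hx
    rw [this, bot_sup_eq]
  have hq1 : Module.finrank 𝕜 ((M0 ⧸ N) ⧸ (S.map N.mkQ))
      = Module.finrank 𝕜 (M0 ⧸ (N ⊔ S)) := by
    rw [← hmapsup]
    exact (Submodule.quotientQuotientEquivQuotient N (N ⊔ S) le_sup_left).finrank_eq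
  have hq2 : Module.finrank 𝕜 (M0 ⧸ (N ⊔ S)) ≤ Module.finrank 𝕜 (M0 ⧸ S) := by
    have hsurj : Function.Surjective (Submodule.mapQ S (N ⊔ S) LinearMap.id le_sup_right) := by
      intro y
      obtain ⟨x, rfl⟩ := Submodule.Quotient.mk_surjective _ y
      exact ⟨Submodule.Quotient.mk x, by rw [Submodule.mapQ_apply]; rfl⟩
    have h1 := LinearMap.finrank_range_le (Submodule.mapQ S (N ⊔ S) LinearMap.id le_sup_right)
    rwa [LinearMap.range_eq_top.mpr hsurj, finrank_top] at h1
  have hq3 : Module.finrank 𝕜 (M0 ⧸ S) ≤ 1 := by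
    set f : M0 →ₗ[𝕜] 𝕜 :=
      (LinearMap.proj (R := 𝕜) (φ := fun _ : Finset V => 𝕜) e).comp (cycles 𝕜 L 1).subtype with hf
    have hker : LinearMap.ker f = S := by
      ext x
      rw [LinearMap.mem_ker, hS, Submodule.mem_comap, hcap, Submodule.mem_inf]
      simp only [hf, LinearMap.comp_apply, Submodule.coe_subtype, LinearMap.proj_apply]
      exact ⟨fun h0 => ⟨x.2, h0⟩, fun h0 => h0.2⟩
    have he1 : Module.finrank 𝕜 (M0 ⧸ S) = Module.finrank 𝕜 (LinearMap.range f) := by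
      rw [← hker]
      exact f.quotKerEquivRange.finrank_eq
    rw [he1]
    have := Submodule.finrank_le (LinearMap.range f)
    rwa [Module.finrank_self] at this
  rw [hsplit, hrange]
  have := hq1 ▸ hq2
  omega

lemma betti_le_finrank_cycles (K : SimpComplex V) :
    betti 𝕜 K 1 ≤ Module.finrank 𝕜 (cycles 𝕜 K 1) :=
  Submodule.finrank_quotient_le _

lemma betti_eq_finrank_cycles_of_cliqueFree (H : SimpleGraph V) (hH : H.CliqueFree 3) :
    betti 𝕜 (flagComplex H) 1 = Module.finrank 𝕜 (cycles 𝕜 (flagComplex H) 1) := by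
  have hbot : boundaries 𝕜 (flagComplex H) 1 = ⊥ := by
    refine le_bot_iff.mp ?_
    rintro y ⟨g, hg, rfl⟩
    have hg0 : g = 0 := by
      funext s
      by_contra hs
      obtain ⟨hface, hcard⟩ := hg s hs
      have hcard3 : s.card = 3 := by exact_mod_cast hcard
      exact hH s ⟨(mem_flagComplex_faces H s).mp hface, hcard3⟩
    rw [hg0]
    simp
  have : (boundaries 𝕜 (flagComplex H) 1).comap (cycles 𝕜 (flagComplex H) 1).subtype = ⊥ := by
    rw [hbot, Submodule.comap_bot, Submodule.ker_subtype]
  rw [betti, this]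
  exact (Submodule.quotEquivOfEqBot _ rfl).finrank_eq

lemma cycles_eq_inf_ker {G G' : SimpleGraph V} {u v : V} (hne : u ≠ v) (hle : G ≤ G')
    (hnadj : ¬ G.Adj u v)
    (hedges : ∀ x y, G'.Adj x y → s(x, y) = s(u, v) ∨ G.Adj x y) :
    cycles 𝕜 (flagComplex G) 1 = cycles 𝕜 (flagComplex G') 1 ⊓ LinearMap.ker
      (LinearMap.proj (R := 𝕜) (φ := fun _ : Finset V => 𝕜) ({u, v} : Finset V)) := by
  ext z
  rw [Submodule.mem_inf, LinearMap.mem_ker, LinearMap.proj_apply]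
  constructor
  · intro hz
    refine ⟨cycles_mono 𝕜 (flagComplex_faces_mono hle) 1 hz, ?_⟩
    by_contra h0
    exact hnadj ((face_pair_iff G hne).mp (((mem_cycles_iff 𝕜 _ _ _).mp hz).1 _ h0).1)
  · rintro ⟨hz, h0⟩
    rw [mem_cycles_iff] at hz ⊢
    refine ⟨?_, hz.2⟩
    intro s hs
    obtain ⟨hface, hcard⟩ := hz.1 s hs
    have hcard2 : s.card = 2 := by exact_mod_cast hcard
    rcases clique2_cases hedges hface hcard2 with rfl | hfG
    · exact absurd h0 hs
    · exact ⟨hfG, hcard⟩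

end Aux5
section Aux6
open Finset
variable {V : Type} [Fintype V] [LinearOrder V]
variable (𝕜 : Type) [Field 𝕜]

lemma cast_pair_coeff {x y : V} (hxy : x < y) (t : Finset V) :
    ((bdryCoeff {x, y} t : ℤ) : 𝕜) = (if t = {y} then 1 else 0) - (if t = {x} then 1 else 0) := by
  rw [bdryCoeff_pair hxy]
  by_cases h1 : t = {y} <;> by_cases h2 : t = {x} <;> simp [h1, h2]

noncomputable def dchain (x y : V) : Finset V → 𝕜 :=
  if x < y then Pi.single {x, y} 1 else -Pi.single {x, y} 1

lemma bdry_dchain {x y : V} (hxy : x ≠ y) :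
    bdry 𝕜 V (dchain 𝕜 x y) = Pi.single {y} 1 - Pi.single {x} 1 := by
  rcases hxy.lt_or_gt with h | h
  · rw [dchain, if_pos h]
    funext t
    rw [bdry_single, mul_one, cast_pair_coeff 𝕜 h t, Pi.sub_apply]
    simp [Pi.single_apply]
  · rw [dchain, if_neg h.asymm, map_neg]
    funext t
    rw [Pi.neg_apply, bdry_single, mul_one,
      show ({x, y} : Finset V) = {y, x} from Finset.pair_comm x y,
      cast_pair_coeff 𝕜 h t, Pi.sub_apply]
    simp [Pi.single_apply]

lemma dchain_mem (H : SimpleGraph V) {x y : V} (hadj : H.Adj x y) :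
    dchain 𝕜 x y ∈ degChains 𝕜 (flagComplex H) 1 := by
  intro s hs
  have hsx : s = ({x, y} : Finset V) := by
    by_contra hne
    apply hs
    rw [dchain]
    split_ifs <;> simp [Pi.single_eq_of_ne hne]
  subst hsx
  refine ⟨(face_pair_iff H hadj.ne).mpr hadj, ?_⟩
  rw [Finset.card_pair hadj.ne]
  norm_num

lemma dchain_eval_ne {x y : V} (hxy : x ≠ y) : dchain 𝕜 x y ({x, y} : Finset V) ≠ 0 := by
  rw [dchain]
  split_ifs <;> simp

noncomputable def walkChain {H : SimpleGraph V} : ∀ {x y : V}, H.Walk x y → (Finset V → 𝕜)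
  | x, _, SimpleGraph.Walk.nil => 0
  | x, _, SimpleGraph.Walk.cons (v := b) _ p => dchain 𝕜 x b + walkChain p

lemma bdry_walkChain {H : SimpleGraph V} {x y : V} (p : H.Walk x y) :
    bdry 𝕜 V (walkChain 𝕜 p) = Pi.single {y} 1 - Pi.single {x} 1 := by
  induction p with
  | nil => simp [walkChain]
  | @cons a b c hadj p ih =>
      simp only [walkChain]
      rw [map_add, ih, bdry_dchain 𝕜 hadj.ne]
      abel

lemma walkChain_mem {H : SimpleGraph V} {x y : V} (p : H.Walk x y) :
    walkChain 𝕜 p ∈ degChains 𝕜 (flagComplex H) 1 := by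
  induction p with
  | nil => exact Submodule.zero_mem _
  | @cons a b c hadj p ih =>
      simp only [walkChain]
      exact Submodule.add_mem _ (dchain_mem 𝕜 H hadj) ih

lemma chains_eval_zero (H : SimpleGraph V) {x y : V} (hxy : x ≠ y) (hnadj : ¬ H.Adj x y)
    {f : Finset V → 𝕜} (hf : f ∈ degChains 𝕜 (flagComplex H) 1) : f ({x, y} : Finset V) = 0 := by
  by_contra h
  exact hnadj ((face_pair_iff H hxy).mp (hf _ h).1)

lemma finrank_cycles_lt {H H' : SimpleGraph V} (hle : H ≤ H') {z : Finset V → 𝕜}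
    (hz : z ∈ cycles 𝕜 (flagComplex H') 1) (e : Finset V) (hze : z e ≠ 0)
    (hev : ∀ f ∈ degChains 𝕜 (flagComplex H) 1, f e = 0) :
    Module.finrank 𝕜 (cycles 𝕜 (flagComplex H) 1) + 1
      ≤ Module.finrank 𝕜 (cycles 𝕜 (flagComplex H') 1) := by
  have hlt : cycles 𝕜 (flagComplex H) 1 < cycles 𝕜 (flagComplex H') 1 := by
    refine lt_of_le_of_ne (cycles_mono 𝕜 (flagComplex_faces_mono hle) 1) (fun hEq => ?_)
    have hzH : z ∈ cycles 𝕜 (flagComplex H) 1 := hEq ▸ hz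
    exact hze (hev z ((mem_cycles_iff 𝕜 _ _ _).mp hzH).1)
  exact Submodule.finrank_lt_finrank_of_lt hlt

lemma reachable_of_adj_imp {G1 H' : SimpleGraph V}
    (h : ∀ x y, G1.Adj x y → H'.Reachable x y) {x y : V} (hr : G1.Reachable x y) :
    H'.Reachable x y := by
  obtain ⟨p⟩ := hr
  induction p with
  | nil => exact SimpleGraph.Reachable.refl _
  | @cons a b c hadj p ih => exact (h _ _ hadj).trans ih

lemma cliqueFree_sup_edge' {H : SimpleGraph V} (hH : H.CliqueFree 3) {u v : V}
    (hcom : ∀ w, ¬(H.Adj u w ∧ H.Adj v w)) :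
    (H ⊔ SimpleGraph.edge u v).CliqueFree 3 := by
  intro t ht
  rw [SimpleGraph.is3Clique_iff] at ht
  obtain ⟨a, b, c, hab, hac, hbc, rfl⟩ := ht
  have hK : H.Adj a b → H.Adj a c → H.Adj b c → False := fun h1 h2 h3 =>
    hH {a, b, c} (SimpleGraph.is3Clique_triple_iff.mpr ⟨h1, h2, h3⟩)
  simp only [SimpleGraph.sup_adj, SimpleGraph.edge_adj] at hab hac hbc
  rcases hab with hab | ⟨hab', habne⟩ <;>
  rcases hac with hac | ⟨hac', hacne⟩ <;>
  rcases hbc with hbc | ⟨hbc', hbcne⟩ <;>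
    (try rcases hab' with ⟨ha1, ha2⟩ | ⟨ha1, ha2⟩) <;>
    (try rcases hac' with ⟨hb1, hb2⟩ | ⟨hb1, hb2⟩) <;>
    (try rcases hbc' with ⟨hc1, hc2⟩ | ⟨hc1, hc2⟩) <;>
    subst_vars <;>
    first
      | exact hK hab hac hbc
      | exact hcom a ⟨hab.symm, hac.symm⟩
      | exact hcom a ⟨hac.symm, hab.symm⟩
      | exact hcom b ⟨hab, hbc.symm⟩
      | exact hcom b ⟨hbc.symm, hab⟩
      | exact hcom c ⟨hac, hbc⟩
      | exact hcom c ⟨hbc, hac⟩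
      | exact hab.ne rfl
      | exact hac.ne rfl
      | exact hbc.ne rfl
      | exact habne rfl
      | exact hacne rfl
      | exact hbcne rfl
      | simp_all [SimpleGraph.irrefl]

lemma cliqueFree_of_one_edge {G1 : SimpleGraph V} (h : Nat.card G1.edgeSet = 1) :
    G1.CliqueFree 3 := by
  intro t ht
  rw [SimpleGraph.is3Clique_iff] at ht
  obtain ⟨a, b, c, hab, hac, hbc, rfl⟩ := ht
  rw [Nat.card_coe_set_eq, Set.ncard_eq_one] at h
  obtain ⟨e, he⟩ := h
  have h1 : s(a, b) ∈ G1.edgeSet := hab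
  have h2 : s(a, c) ∈ G1.edgeSet := hac
  rw [he, Set.mem_singleton_iff] at h1 h2
  have : s(a, b) = s(a, c) := h1.trans h2.symm
  rcases Sym2.eq_iff.mp this with ⟨_, h4⟩ | ⟨h3, h4⟩
  · exact hbc.ne h4
  · exact hac.ne h3

lemma exists_new_edge {G1 G2 : SimpleGraph V} (hle : G1 ≤ G2) (n : ℕ)
    (h1 : Nat.card G1.edgeSet = n) (h2 : Nat.card G2.edgeSet = n + 1) :
    ∃ u v : V, u < v ∧ G2.Adj u v ∧ ¬ G1.Adj u v ∧
      (∀ x y, G2.Adj x y → s(x, y) = s(u, v) ∨ G1.Adj x y) := by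
  classical
  rw [Nat.card_coe_set_eq] at h1 h2
  have hsub : G1.edgeSet ⊆ G2.edgeSet := SimpleGraph.edgeSet_mono hle
  have hdiff : (G2.edgeSet \ G1.edgeSet).ncard = 1 := by
    rw [Set.ncard_diff hsub (Set.toFinite _), h1, h2]
    omega
  obtain ⟨e, he⟩ := Set.ncard_eq_one.mp hdiff
  induction e using Sym2.ind with
  | _ x y =>
    have hmem : s(x, y) ∈ G2.edgeSet \ G1.edgeSet := by rw [he]; rfl
    have hadj2 : G2.Adj x y := hmem.1
    have hnadj1 : ¬ G1.Adj x y := fun h => hmem.2 h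
    have key : ∀ x' y', G2.Adj x' y' → s(x', y') = s(x, y) ∨ G1.Adj x' y' := by
      intro x' y' hadj
      by_cases hG1 : G1.Adj x' y'
      · exact Or.inr hG1
      · left
        have : s(x', y') ∈ G2.edgeSet \ G1.edgeSet := ⟨hadj, fun h => hG1 h⟩
        rw [he, Set.mem_singleton_iff] at this
        exact this
    rcases hadj2.ne.lt_or_gt with hlt | hlt
    · exact ⟨x, y, hlt, hadj2, hnadj1, key⟩
    · refine ⟨y, x, hlt, hadj2.symm, fun h => hnadj1 h.symm, ?_⟩
      intro x' y' hadj
      rcases key x' y' hadj with h | h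
      · exact Or.inl (h.trans (Sym2.eq_swap))
      · exact Or.inr h

end Aux6
section Aux7

lemma card_filter_congr {α : Type} {s : Multiset α} {P Q : α → Prop}
    [DecidablePred P] [DecidablePred Q] (h : ∀ x ∈ s, P x ↔ Q x) :
    Multiset.card (s.filter P) = Multiset.card (s.filter Q) := by
  rw [Multiset.filter_congr h]

lemma ms_card_split {α : Type} (s : Multiset α) (P Q : α → Prop)
    [DecidablePred P] [DecidablePred Q] :
    Multiset.card (s.filter P)
      = Multiset.card (s.filter (fun x => P x ∧ Q x))
        + Multiset.card (s.filter (fun x => P x ∧ ¬ Q x)) := by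
  have h := congrArg Multiset.card (Multiset.filter_add_not Q (s.filter P))
  rw [Multiset.card_add, Multiset.filter_filter, Multiset.filter_filter] at h
  rw [← h]
  congr 1
  · exact card_filter_congr (fun x _ => and_comm)
  · exact card_filter_congr (fun x _ => and_comm)

end Aux7
/-- For an edgewise filtration `𝒢 = G_1 ⊆ ⋯ ⊆ G_m`, there is a triangle-free
subgraph `H` of `G_m` with `β₁(X(H)) ≥ |B₁(𝒢)|`, the number of intervals in the degree-1
barcode. -/
theorem exists_triangleFree_subgraph_betti_ge_barcodeCard
    (𝕜 : Type) [Field 𝕜] {V : Type} [Fintype V] [LinearOrder V]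
    (G : ℕ → SimpleGraph V) (m : ℕ) (hm : 1 ≤ m) (hG : IsEdgewiseFiltration G m)
    (B : Multiset (ℕ × ℕ)) (hB : IsBarcode 𝕜 G m 1 B) :
    ∃ H : SimpleGraph V, H ≤ G m ∧ H.CliqueFree 3 ∧
      Multiset.card B ≤ betti 𝕜 (flagComplex H) 1 := by
  classical
  obtain ⟨hGmono, hGcard⟩ := hG
  obtain ⟨hBbounds, hBrank⟩ := hB
  have main : ∀ a : ℕ, 1 ≤ a → a ≤ m → ∃ H : SimpleGraph V, H ≤ G a ∧ H.CliqueFree 3 ∧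
      (∀ x y : V, (G a).Reachable x y → H.Reachable x y) ∧
      Multiset.card (B.filter (fun p => p.1 ≤ a))
        ≤ Module.finrank 𝕜 (cycles 𝕜 (flagComplex H) 1) := by
    intro a ha
    induction a, ha using Nat.le_induction with
    | base =>
      intro h1m
      refine ⟨G 1, le_rfl, cliqueFree_of_one_edge (hGcard 1 le_rfl h1m), fun x y h => h, ?_⟩
      have h1 : Multiset.card (B.filter (fun p => p.1 ≤ 1))
          = Multiset.card (B.filter (fun p => p.1 ≤ 1 ∧ 1 < p.2)) := by
        refine card_filter_congr (fun p hp => ?_)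
        obtain ⟨hb1, hb2, hb3⟩ := hBbounds p hp
        omega
      have hsub : (flagComplex (G 1)).faces ⊆ (flagComplex (G 1)).faces := subset_refl _
      have h2 := hBrank 1 1 le_rfl le_rfl h1m hsub
      have h3 : Multiset.card (B.filter (fun p => p.1 ≤ 1 ∧ 1 < p.2))
          = Module.finrank 𝕜 (LinearMap.range (inducedMap 𝕜 hsub 1)) := by
        rw [h2]
        try exact card_filter_congr (fun p hp => Iff.rfl)
      rw [h1, h3, rank_eq_betti_of_cycles_le_sup 𝕜 hsub le_sup_left]
      exact betti_le_finrank_cycles 𝕜 _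
    | succ a ha ih =>
      intro ham1
      have ham : a ≤ m := by omega
      obtain ⟨H, hHle, hHcf, hHreach, hHcount⟩ := ih ham
      have hle : G a ≤ G (a + 1) := hGmono a (a + 1) ha (Nat.le_succ a) ham1
      obtain ⟨u, v, huv, hadj, hnadj, hedges⟩ := exists_new_edge hle a
        (hGcard a ha ham) (hGcard (a + 1) (by omega) ham1)
      have hfaces : (flagComplex (G a)).faces ⊆ (flagComplex (G (a + 1))).faces :=
        flagComplex_faces_mono hle
      have E1 : Multiset.card (B.filter (fun p => p.1 ≤ a + 1))
          = Multiset.card (B.filter (fun p => p.1 ≤ a))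
            + Multiset.card (B.filter (fun p => p.1 = a + 1)) := by
        rw [ms_card_split B (fun p => p.1 ≤ a + 1) (fun p => p.1 ≤ a)]
        congr 1
        · exact card_filter_congr (fun p hp => by omega)
        · exact card_filter_congr (fun p hp => by omega)
      have E2 : Multiset.card (B.filter (fun p => p.1 ≤ a + 1 ∧ a + 1 < p.2))
          = Multiset.card (B.filter (fun p => p.1 ≤ a ∧ a + 1 < p.2))
            + Multiset.card (B.filter (fun p => p.1 = a + 1)) := by
        rw [ms_card_split B (fun p => p.1 ≤ a + 1 ∧ a + 1 < p.2) (fun p => p.1 ≤ a)]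
        congr 1
        · exact card_filter_congr (fun p hp => by omega)
        · refine card_filter_congr (fun p hp => ?_)
          obtain ⟨hb1, hb2, hb3⟩ := hBbounds p hp
          omega
      have hr2 := hBrank (a + 1) (a + 1) (by omega) le_rfl ham1 (subset_refl _)
      have hbettiL : Module.finrank 𝕜
            (LinearMap.range (inducedMap 𝕜 (subset_refl (flagComplex (G (a + 1))).faces) 1))
          = betti 𝕜 (flagComplex (G (a + 1))) 1 :=
        rank_eq_betti_of_cycles_le_sup 𝕜 _ le_sup_left
      have hBettiCard : betti 𝕜 (flagComplex (G (a + 1))) 1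
          = Multiset.card (B.filter (fun p => p.1 ≤ a + 1 ∧ a + 1 < p.2)) := by
        rw [← hbettiL, hr2]
        try exact card_filter_congr (fun p hp => Iff.rfl)
      have hr1 := hBrank a (a + 1) ha (Nat.le_succ a) ham1 hfaces
      have hRankCard : Module.finrank 𝕜 (LinearMap.range (inducedMap 𝕜 hfaces 1))
          = Multiset.card (B.filter (fun p => p.1 ≤ a ∧ a + 1 < p.2)) := by
        rw [hr1]
        try exact card_filter_congr (fun p hp => Iff.rfl)
      have hnadjH : ¬ H.Adj u v := fun h => hnadj (hHle h)
      by_cases hcom : ∃ w, H.Adj u w ∧ H.Adj v w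
      · obtain ⟨w, hw1, hw2⟩ := hcom
        have hsup := cycles_le_sup_of_triangle 𝕜 huv hle hadj hnadj hedges
          (hHle hw1) ((hHle hw2).symm)
        have hEq : Module.finrank 𝕜 (LinearMap.range (inducedMap 𝕜 hfaces 1))
            = betti 𝕜 (flagComplex (G (a + 1))) 1 :=
          rank_eq_betti_of_cycles_le_sup 𝕜 hfaces hsup
        have hb0 : Multiset.card (B.filter (fun p => p.1 = a + 1)) = 0 := by
          have hh := hRankCard.symm.trans (hEq.trans hBettiCard)
          omega
        refine ⟨H, hHle.trans hle, hHcf, ?_, ?_⟩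
        · intro x y hr
          refine reachable_of_adj_imp ?_ hr
          intro x' y' hadj'
          rcases hedges x' y' hadj' with he | hGa
          · rcases Sym2.eq_iff.mp he with ⟨rfl, rfl⟩ | ⟨rfl, rfl⟩
            · exact hw1.reachable.trans hw2.reachable.symm
            · exact hw2.reachable.trans hw1.reachable.symm
          · exact hHreach x' y' hGa.reachable
        · omega
      · have hcom' : ∀ w, ¬ (H.Adj u w ∧ H.Adj v w) := fun w hw => hcom ⟨w, hw⟩
        set H' := H ⊔ SimpleGraph.edge u v with hH'
        have hH'adj : H'.Adj u v := by
          rw [hH', SimpleGraph.sup_adj, SimpleGraph.edge_adj]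
          exact Or.inr ⟨Or.inl ⟨rfl, rfl⟩, huv.ne⟩
        have hH'le : H' ≤ G (a + 1) := by
          rw [hH']
          refine sup_le (hHle.trans hle) ?_
          intro x y hxy
          rw [SimpleGraph.edge_adj] at hxy
          rcases hxy with ⟨⟨rfl, rfl⟩ | ⟨rfl, rfl⟩, _⟩
          · exact hadj
          · exact hadj.symm
        have hH'cf : H'.CliqueFree 3 := cliqueFree_sup_edge' hHcf hcom'
        have hreach' : ∀ x y : V, (G (a + 1)).Reachable x y → H'.Reachable x y := by
          intro x y hr
          refine reachable_of_adj_imp ?_ hr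
          intro x' y' hadj'
          rcases hedges x' y' hadj' with he | hGa
          · rcases Sym2.eq_iff.mp he with ⟨rfl, rfl⟩ | ⟨rfl, rfl⟩
            · exact hH'adj.reachable
            · exact hH'adj.symm.reachable
          · exact (hHreach x' y' hGa.reachable).mono le_sup_left
        by_cases hre : H.Reachable u v
        · obtain ⟨p⟩ := hre
          set z : Finset V → 𝕜 := walkChain 𝕜 p + dchain 𝕜 v u with hz
          have hzmem : z ∈ cycles 𝕜 (flagComplex H') 1 := by
            rw [mem_cycles_iff]
            constructor
            · exact Submodule.add_mem _
                (degChains_mono 𝕜 (flagComplex_faces_mono le_sup_left) 1 (walkChain_mem 𝕜 p))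
                (dchain_mem 𝕜 H' hH'adj.symm)
            · rw [hz, map_add, bdry_walkChain, bdry_dchain 𝕜 huv.ne']
              abel
          have hzne : z ({u, v} : Finset V) ≠ 0 := by
            rw [hz, Pi.add_apply,
              chains_eval_zero 𝕜 H huv.ne hnadjH (walkChain_mem 𝕜 p), zero_add,
              show ({u, v} : Finset V) = {v, u} from Finset.pair_comm u v]
            exact dchain_eval_ne 𝕜 huv.ne'
          have hgrow := finrank_cycles_lt 𝕜 (le_sup_left : H ≤ H') hzmem
            ({u, v} : Finset V) hzne
            (fun f hf => chains_eval_zero 𝕜 H huv.ne hnadjH hf)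
          have hcap := cycles_eq_inf_ker 𝕜 huv.ne hle hnadj hedges
          have hble := betti_le_rank_add_one 𝕜 hfaces hcap
          have hb1 : Multiset.card (B.filter (fun p => p.1 = a + 1)) ≤ 1 := by
            omega
          try rw [← hH'] at hgrow
          refine ⟨H', hH'le, hH'cf, hreach', ?_⟩
          omega
        · have hGnre : ¬ (G a).Reachable u v := fun h => hre (hHreach u v h)
          have hcyc := cycles_eq_of_not_reachable 𝕜 huv hle hedges hGnre
          have hsup : cycles 𝕜 (flagComplex (G (a + 1))) 1
              ≤ cycles 𝕜 (flagComplex (G a)) 1 ⊔ boundaries 𝕜 (flagComplex (G (a + 1))) 1 := by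
            rw [hcyc]
            exact le_sup_left
          have hEq := rank_eq_betti_of_cycles_le_sup 𝕜 hfaces hsup
          have hb0 : Multiset.card (B.filter (fun p => p.1 = a + 1)) = 0 := by
            have hh := hRankCard.symm.trans (hEq.trans hBettiCard)
            omega
          have hmono : Module.finrank 𝕜 (cycles 𝕜 (flagComplex H) 1)
              ≤ Module.finrank 𝕜 (cycles 𝕜 (flagComplex H') 1) :=
            Submodule.finrank_mono (cycles_mono 𝕜 (flagComplex_faces_mono le_sup_left) 1)
          refine ⟨H', hH'le, hH'cf, hreach', ?_⟩
          omega
  obtain ⟨H, hHle, hHcf, _, hcount⟩ := main m hm le_rfl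
  refine ⟨H, hHle, hHcf, ?_⟩
  have hall : B.filter (fun p => p.1 ≤ m) = B := by
    rw [Multiset.filter_eq_self]
    intro p hp
    obtain ⟨hb1, hb2, hb3⟩ := hBbounds p hp
    omega
  rw [betti_eq_finrank_cycles_of_cliqueFree 𝕜 H hHcf, ← hall]
  exact hcount
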